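/- For the Bernstein-Durrmeyer kernel $\mathcal{K}_n(x,t)=(n+1)\sum_{k=0}^n p_{n,k}(x)p_{n,k}(t)$ on $[0,1]$, for all $x\in[0,1]$, $\delta>0$ and $n\ge1$: $\int_{\{t\in[0,1]:|x-t|\ge\delta\}}\mathcal{K}_n(x,t)\,dt \le \frac{1}{2n\delta^2}$. -/

import Mathlib

open Set MeasureTheory Finset intervalIntegral

/-- Bernstein basis polynomial `p_{n,k}(x) = C(n,k) x^k (1-x)^{n-k}`. -/
noncomputable def bernstein' (n k : ℕ) (x : ℝ) : ℝ :=
  (n.choose k : ℝ) * x ^ k * (1 - x) ^ (n - k)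

/-- The Bernstein-Durrmeyer kernel `K_n(x,t) = (n+1) ∑_{k=0}^n p_{n,k}(x) p_{n,k}(t)`. -/
noncomputable def bdKernel (n : ℕ) (x t : ℝ) : ℝ :=
  (n + 1 : ℝ) * ∑ k ∈ Finset.range (n + 1), bernstein' n k x * bernstein' n k t

lemma beta_nat (a b : ℕ) :
    ∫ t in (0:ℝ)..1, t ^ a * (1 - t) ^ b
      = (a.factorial * b.factorial : ℝ) / (a + b + 1).factorial := by
  induction b generalizing a with
  | zero =>
    simp only [pow_zero, mul_one, integral_pow, Nat.add_zero, Nat.factorial_one, Nat.cast_one]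
    rw [Nat.factorial_succ, zero_pow (Nat.succ_ne_zero a)]
    have hf : (a.factorial : ℝ) ≠ 0 := by positivity
    push_cast
    rw [div_eq_div_iff (by positivity) (by positivity)]
    simp [Nat.factorial_zero]
    ring
  | succ b ih =>
    have key : ∫ t in (0:ℝ)..1, (t ^ (a+1)) * (-(b+1 : ℝ) * (1 - t) ^ b)
        = (1:ℝ)^(a+1) * (1-1)^(b+1) - (0:ℝ)^(a+1) * (1-0)^(b+1)
          - ∫ t in (0:ℝ)..1, ((a+1 : ℝ) * t ^ a) * (1 - t) ^ (b+1) := by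
      apply intervalIntegral.integral_mul_deriv_eq_deriv_mul
        (u := fun t => t ^ (a+1)) (v := fun t => (1 - t) ^ (b+1))
      · intro t _
        simpa using (hasDerivAt_pow (a+1) t)
      · intro t _
        have h1 : HasDerivAt (fun t : ℝ => 1 - t) (-1) t := by
          simpa using ((hasDerivAt_id t).const_sub 1)
        have h2 : HasDerivAt (fun t : ℝ => (1 - t) ^ (b+1)) _ t := h1.pow (b+1)
        refine h2.congr_deriv ?_
        push_cast [Nat.add_sub_cancel]
        ring
      · apply Continuous.intervalIntegrable; continuity
      · apply Continuous.intervalIntegrable; continuity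
    have e1 : ∫ t in (0:ℝ)..1, (t ^ (a+1)) * (-(b+1 : ℝ) * (1 - t) ^ b)
        = -(b+1 : ℝ) * ∫ t in (0:ℝ)..1, t ^ (a+1) * (1 - t) ^ b := by
      rw [← intervalIntegral.integral_const_mul]
      congr 1; ext t; ring
    have e2 : ∫ t in (0:ℝ)..1, ((a+1 : ℝ) * t ^ a) * (1 - t) ^ (b+1)
        = (a+1 : ℝ) * ∫ t in (0:ℝ)..1, t ^ a * (1 - t) ^ (b+1) := by
      rw [← intervalIntegral.integral_const_mul]
      congr 1; ext t; ring
    rw [e1, e2, ih (a+1)] at key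
    simp only [one_pow, sub_self, zero_pow (Nat.succ_ne_zero a), zero_mul, mul_zero, zero_sub,
      neg_mul, neg_inj, zero_mul, sub_zero] at key
    have ha1 : (a+1 : ℝ) ≠ 0 := by positivity
    have hfact : ((a + b + 2).factorial : ℝ) ≠ 0 := by positivity
    have e3 : ((a+1).factorial : ℝ) = (a+1) * a.factorial := by
      rw [Nat.factorial_succ]; push_cast; ring
    have e4 : ((b+1).factorial : ℝ) = (b+1) * b.factorial := by
      rw [Nat.factorial_succ]; push_cast; ring
    have e5 : (a + 1 + b + 1) = (a + (b+1) + 1) := by ring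
    rw [e5] at key
    rw [zero_pow (Nat.succ_ne_zero b)] at key
    have key2 : (a+1 : ℝ) * (∫ t in (0:ℝ)..1, t ^ a * (1 - t) ^ (b+1))
        = (b+1) * ((a + 1).factorial * b.factorial / (a + (b + 1) + 1).factorial) := by
      linarith
    have goal : (a+1 : ℝ) * ∫ t in (0:ℝ)..1, t ^ a * (1 - t) ^ (b+1)
        = (a+1 : ℝ) * ((a.factorial * (b+1).factorial : ℝ) / (a + (b+1) + 1).factorial) := by
      rw [key2, e3, e4]
      ring
    exact mul_left_cancel₀ ha1 goal

lemma bern_eval (n k : ℕ) (x : ℝ) :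
    bernstein' n k x = (bernsteinPolynomial ℝ n k).eval x := by
  simp [bernstein', bernsteinPolynomial]

lemma bern_cont (n k : ℕ) : Continuous (bernstein' n k) := by
  unfold bernstein'; continuity

lemma bern_moment (n k j : ℕ) (hk : k ≤ n) :
    ∫ t in (0:ℝ)..1, t ^ j * bernstein' n k t
      = (n.choose k : ℝ) * ((k+j).factorial * (n-k).factorial) / (n+j+1).factorial := by
  have : ∀ t : ℝ, t ^ j * bernstein' n k t
      = (n.choose k : ℝ) * (t ^ (k+j) * (1 - t) ^ (n-k)) := by
    intro t; unfold bernstein'; rw [pow_add]; ring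
  rw [intervalIntegral.integral_congr (fun t _ => this t),
    intervalIntegral.integral_const_mul, beta_nat]
  have he : k + j + (n - k) + 1 = n + j + 1 := by omega
  rw [he]; ring

lemma bern_sum0 (n : ℕ) (x : ℝ) :
    ∑ k ∈ Finset.range (n+1), bernstein' n k x = 1 := by
  simp only [bern_eval]
  rw [← Polynomial.eval_finset_sum, bernsteinPolynomial.sum]
  simp

lemma bern_sum1 (n : ℕ) (x : ℝ) :
    ∑ k ∈ Finset.range (n+1), (k : ℝ) * bernstein' n k x = n * x := by
  simp only [bern_eval]
  have := congrArg (Polynomial.eval x) (bernsteinPolynomial.sum_smul ℝ n)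
  simpa [Polynomial.eval_finset_sum] using this

lemma bern_sum2 (n : ℕ) (x : ℝ) :
    ∑ k ∈ Finset.range (n+1), (k : ℝ) * ((k:ℝ) - 1) * bernstein' n k x
      = n * (n - 1) * x ^ 2 := by
  have cast : ∀ m : ℕ, ((m * (m-1) : ℕ) : ℝ) = (m:ℝ) * ((m:ℝ) - 1) := by
    intro m
    cases m with
    | zero => simp
    | succ m => push_cast [Nat.succ_sub_one]; ring
  simp only [bern_eval]
  have := congrArg (Polynomial.eval x) (bernsteinPolynomial.sum_mul_smul ℝ n)
  simp only [Polynomial.eval_finset_sum, Polynomial.eval_smul, smul_eq_mul, nsmul_eq_mul,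
    Polynomial.eval_mul, Polynomial.eval_pow, Polynomial.eval_X, Polynomial.eval_natCast, cast] at this
  exact this

lemma bern_m0 (n k : ℕ) (hk : k ≤ n) :
    ∫ t in (0:ℝ)..1, bernstein' n k t = 1 / (n+1 : ℝ) := by
  have h := bern_moment n k 0 hk
  simp only [pow_zero, one_mul] at h
  rw [h]
  have hch : (n.choose k : ℝ) * k.factorial * (n-k).factorial = n.factorial := by
    exact_mod_cast congrArg (Nat.cast : ℕ → ℝ) (Nat.choose_mul_factorial_mul_factorial hk)
  have hf1 : ((n+0+1).factorial : ℝ) = (n+1) * n.factorial := by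
    simp [Nat.factorial_succ]
  rw [show k + 0 = k from rfl, hf1, div_eq_div_iff (by positivity) (by positivity)]
  have hfn : (0:ℝ) < n.factorial := by positivity
  nlinarith [hch, hfn]

lemma bern_m1 (n k : ℕ) (hk : k ≤ n) :
    ∫ t in (0:ℝ)..1, t * bernstein' n k t = (k+1 : ℝ) / ((n+1) * (n+2)) := by
  have h := bern_moment n k 1 hk
  simp only [pow_one] at h
  rw [h]
  have hch : (n.choose k : ℝ) * k.factorial * (n-k).factorial = n.factorial := by
    exact_mod_cast congrArg (Nat.cast : ℕ → ℝ) (Nat.choose_mul_factorial_mul_factorial hk)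
  have hf1 : ((k+1).factorial : ℝ) = (k+1) * k.factorial := by
    simp [Nat.factorial_succ]
  have hf2 : ((n+1+1).factorial : ℝ) = (n+2) * ((n+1) * n.factorial) := by
    rw [Nat.factorial_succ, Nat.factorial_succ]; push_cast; ring
  rw [hf1, hf2, div_eq_div_iff (by positivity) (by positivity)]
  have hfn : (0:ℝ) < n.factorial := by positivity
  linear_combination ((k:ℝ)+1) * ((n:ℝ)+1) * ((n:ℝ)+2) * hch

lemma bern_m2 (n k : ℕ) (hk : k ≤ n) :
    ∫ t in (0:ℝ)..1, t^2 * bernstein' n k t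
      = (k+1 : ℝ) * (k+2) / ((n+1) * (n+2) * (n+3)) := by
  have h := bern_moment n k 2 hk
  rw [h]
  have hch : (n.choose k : ℝ) * k.factorial * (n-k).factorial = n.factorial := by
    exact_mod_cast congrArg (Nat.cast : ℕ → ℝ) (Nat.choose_mul_factorial_mul_factorial hk)
  have hf1 : ((k+2).factorial : ℝ) = (k+2) * ((k+1) * k.factorial) := by
    rw [Nat.factorial_succ, Nat.factorial_succ]; push_cast; ring
  have hf2 : ((n+2+1).factorial : ℝ) = (n+3) * ((n+2) * ((n+1) * n.factorial)) := by
    rw [Nat.factorial_succ, Nat.factorial_succ, Nat.factorial_succ]; push_cast; ring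
  rw [hf1, hf2, div_eq_div_iff (by positivity) (by positivity)]
  have hfn : (0:ℝ) < n.factorial := by positivity
  linear_combination ((k:ℝ)+1) * ((k:ℝ)+2) * ((n:ℝ)+1) * ((n:ℝ)+2) * ((n:ℝ)+3) * hch

lemma bern_inner (n k : ℕ) (hk : k ≤ n) (x : ℝ) :
    ∫ t in (0:ℝ)..1, (x - t)^2 * bernstein' n k t
      = x^2 * (1 / (n+1 : ℝ)) - 2*x * ((k+1 : ℝ) / ((n+1)*(n+2)))
        + (k+1 : ℝ) * (k+2) / ((n+1)*(n+2)*(n+3)) := by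
  have expand : ∀ t : ℝ, (x - t)^2 * bernstein' n k t
      = x^2 * bernstein' n k t - 2*x * (t * bernstein' n k t) + t^2 * bernstein' n k t := by
    intro t; ring
  have c0 : Continuous (fun t : ℝ => bernstein' n k t) := bern_cont n k
  have i0 : IntervalIntegrable (fun t : ℝ => x^2 * bernstein' n k t) volume 0 1 :=
    (continuous_const.mul c0).intervalIntegrable _ _
  have i1 : IntervalIntegrable (fun t : ℝ => 2*x * (t * bernstein' n k t)) volume 0 1 :=
    (continuous_const.mul (continuous_id.mul c0)).intervalIntegrable _ _
  have i2 : IntervalIntegrable (fun t : ℝ => t^2 * bernstein' n k t) volume 0 1 :=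
    ((continuous_pow 2).mul c0).intervalIntegrable _ _
  rw [intervalIntegral.integral_congr (fun t _ => expand t),
    intervalIntegral.integral_add (i0.sub i1) i2, intervalIntegral.integral_sub i0 i1,
    intervalIntegral.integral_const_mul, intervalIntegral.integral_const_mul,
    bern_m0 n k hk, bern_m1 n k hk, bern_m2 n k hk]

lemma second_moment (n : ℕ) (x : ℝ) :
    ∫ t in (0:ℝ)..1, (x - t)^2 * bdKernel n x t
      = (n+1 : ℝ) * ((x^2 * (1 / (n+1 : ℝ)) - 2*x * (1 / ((n+1)*(n+2)))
          + 2 / ((n+1)*(n+2)*(n+3)))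
        + (- 2*x / ((n+1)*(n+2)) + 4 / ((n+1)*(n+2)*(n+3))) * (n * x)
        + (1 / ((n+1)*(n+2)*(n+3))) * (n * (n-1) * x^2)) := by
  have expand : ∀ t : ℝ, (x - t)^2 * bdKernel n x t
      = ∑ k ∈ Finset.range (n+1),
          (n+1 : ℝ) * bernstein' n k x * ((x - t)^2 * bernstein' n k t) := by
    intro t
    rw [bdKernel, Finset.mul_sum, Finset.mul_sum]
    apply Finset.sum_congr rfl
    intro k _
    ring
  have hint : ∀ k ∈ Finset.range (n+1), IntervalIntegrable
      (fun t : ℝ => (n+1 : ℝ) * bernstein' n k x * ((x - t)^2 * bernstein' n k t))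
      volume 0 1 := by
    intro k _
    apply Continuous.intervalIntegrable
    exact continuous_const.mul (((continuous_const.sub continuous_id').pow 2).mul (bern_cont n k))
  rw [intervalIntegral.integral_congr (fun t _ => expand t),
    intervalIntegral.integral_finset_sum hint]
  have step : ∀ k ∈ Finset.range (n+1),
      (∫ t in (0:ℝ)..1, (n+1 : ℝ) * bernstein' n k x * ((x - t)^2 * bernstein' n k t))
      = (n+1 : ℝ) * (((x^2 * (1 / (n+1 : ℝ)) - 2*x * (1 / ((n+1)*(n+2)))
            + 2 / ((n+1)*(n+2)*(n+3)))
          + (- 2*x / ((n+1)*(n+2)) + 4 / ((n+1)*(n+2)*(n+3))) * (k : ℝ)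
          + (1 / ((n+1)*(n+2)*(n+3))) * ((k:ℝ) * ((k:ℝ) - 1))) * bernstein' n k x) := by
    intro k hk
    rw [intervalIntegral.integral_const_mul, bern_inner n k (Nat.lt_succ_iff.mp (Finset.mem_range.mp hk)) x]
    ring
  rw [Finset.sum_congr rfl step]
  have : ∑ k ∈ Finset.range (n+1),
      (n+1 : ℝ) * (((x^2 * (1 / (n+1 : ℝ)) - 2*x * (1 / ((n+1)*(n+2)))
            + 2 / ((n+1)*(n+2)*(n+3)))
          + (- 2*x / ((n+1)*(n+2)) + 4 / ((n+1)*(n+2)*(n+3))) * (k : ℝ)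
          + (1 / ((n+1)*(n+2)*(n+3))) * ((k:ℝ) * ((k:ℝ) - 1))) * bernstein' n k x)
      = (n+1 : ℝ) * ((x^2 * (1 / (n+1 : ℝ)) - 2*x * (1 / ((n+1)*(n+2)))
            + 2 / ((n+1)*(n+2)*(n+3)))
          * (∑ k ∈ Finset.range (n+1), bernstein' n k x)
        + (- 2*x / ((n+1)*(n+2)) + 4 / ((n+1)*(n+2)*(n+3)))
          * (∑ k ∈ Finset.range (n+1), (k:ℝ) * bernstein' n k x)
        + (1 / ((n+1)*(n+2)*(n+3)))
          * (∑ k ∈ Finset.range (n+1), (k:ℝ) * ((k:ℝ)-1) * bernstein' n k x)) := by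
    rw [Finset.mul_sum, Finset.mul_sum, Finset.mul_sum, ← Finset.sum_add_distrib,
      ← Finset.sum_add_distrib, Finset.mul_sum]
    apply Finset.sum_congr rfl
    intro k _
    ring
  rw [this, bern_sum0, bern_sum1, bern_sum2]
  ring

lemma sm_bound (n : ℕ) (hn : 1 ≤ n) (x : ℝ) (hx : x ∈ Set.Icc (0:ℝ) 1) :
    ∫ t in (0:ℝ)..1, (x - t)^2 * bdKernel n x t ≤ 1 / (2*n) := by
  rw [second_moment]
  have hN : (1:ℝ) ≤ n := by exact_mod_cast hn
  obtain ⟨hx0, hx1⟩ := hx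
  have h1 : (0:ℝ) < (n:ℝ) + 1 := by linarith
  have h2 : (0:ℝ) < (n:ℝ) + 2 := by linarith
  have h3 : (0:ℝ) < (n:ℝ) + 3 := by linarith
  have key : (n+1 : ℝ) * ((x^2 * (1 / (n+1 : ℝ)) - 2*x * (1 / ((n+1)*(n+2)))
          + 2 / ((n+1)*(n+2)*(n+3)))
        + (- 2*x / ((n+1)*(n+2)) + 4 / ((n+1)*(n+2)*(n+3))) * (n * x)
        + (1 / ((n+1)*(n+2)*(n+3))) * (n * (n-1) * x^2))
      = 2*(((n:ℝ)-3)*x*(1-x)+1) / (((n:ℝ)+2)*((n:ℝ)+3)) := by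
    field_simp
    ring
  rw [key, div_le_div_iff₀ (by positivity) (by positivity)]
  nlinarith [mul_nonneg (sub_nonneg.2 hN) (mul_nonneg hx0 (sub_nonneg.2 hx1)),
    mul_nonneg hx0 (sub_nonneg.2 hx1), sq_nonneg (2*x-1),
    mul_nonneg (sub_nonneg.2 hN) (sq_nonneg (2*x-1))]

lemma bern_nonneg (n k : ℕ) {t : ℝ} (h0 : 0 ≤ t) (h1 : t ≤ 1) : 0 ≤ bernstein' n k t := by
  unfold bernstein'
  have : (0:ℝ) ≤ 1 - t := by linarith
  positivity

lemma bd_nonneg (n : ℕ) {x t : ℝ} (hx : x ∈ Set.Icc (0:ℝ) 1) (h0 : 0 ≤ t) (h1 : t ≤ 1) :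
    0 ≤ bdKernel n x t := by
  unfold bdKernel
  apply mul_nonneg (by positivity)
  apply Finset.sum_nonneg
  intro k _
  exact mul_nonneg (bern_nonneg n k hx.1 hx.2) (bern_nonneg n k h0 h1)

lemma bd_cont (n : ℕ) (x : ℝ) : Continuous (fun t => bdKernel n x t) := by
  unfold bdKernel
  exact continuous_const.mul (continuous_finset_sum _ (fun k _ =>
    continuous_const.mul (bern_cont n k)))

/-- For the Bernstein-Durrmeyer kernel,
`∫_{t ∈ [0,1], |x-t| ≥ δ} K_n(x,t) dt ≤ 1/(2 n δ²)`. -/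
theorem stmt17 (n : ℕ) (hn : 1 ≤ n) (x δ : ℝ) (hx : x ∈ Set.Icc (0 : ℝ) 1) (hδ : 0 < δ) :
    (∫ t in Set.Icc (0 : ℝ) 1 ∩ {t : ℝ | δ ≤ |x - t|}, bdKernel n x t) ≤
      1 / (2 * n * δ ^ 2) := by
  set A := Set.Icc (0 : ℝ) 1 ∩ {t : ℝ | δ ≤ |x - t|} with hA
  have hAsub : A ⊆ Set.Icc (0:ℝ) 1 := Set.inter_subset_left
  have hAm : MeasurableSet A :=
    measurableSet_Icc.inter (measurableSet_le measurable_const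
      ((measurable_const.sub measurable_id).abs))
  have hg_cont : Continuous (fun t : ℝ => δ⁻¹^2 * ((x - t)^2 * bdKernel n x t)) :=
    continuous_const.mul (((continuous_const.sub continuous_id').pow 2).mul (bd_cont n x))
  have hgI : IntegrableOn (fun t : ℝ => δ⁻¹^2 * ((x - t)^2 * bdKernel n x t))
      (Set.Icc (0:ℝ) 1) volume := hg_cont.integrableOn_Icc
  have hKI : IntegrableOn (fun t : ℝ => bdKernel n x t) A volume :=
    ((bd_cont n x).integrableOn_Icc).mono_set hAsub
  have step1 : (∫ t in A, bdKernel n x t)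
      ≤ ∫ t in A, δ⁻¹^2 * ((x - t)^2 * bdKernel n x t) := by
    apply setIntegral_mono_on hKI (hgI.mono_set hAsub) hAm
    intro t ht
    have ht1 := hAsub ht
    have hK0 := bd_nonneg n hx ht1.1 ht1.2
    have hdist : δ ≤ |x - t| := ht.2
    have h2 : δ^2 ≤ (x - t)^2 := by
      rw [← sq_abs (x - t)]
      exact pow_le_pow_left₀ hδ.le hdist 2
    have : (1:ℝ) ≤ δ⁻¹^2 * (x - t)^2 := by
      have hd2 : (0:ℝ) < δ^2 := by positivity
      have e : δ⁻¹^2 * (x - t)^2 = (x - t)^2 / δ^2 := by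
        field_simp
      rw [e, le_div_iff₀ hd2, one_mul]
      exact h2
    calc bdKernel n x t = 1 * bdKernel n x t := (one_mul _).symm
      _ ≤ (δ⁻¹^2 * (x - t)^2) * bdKernel n x t := by
          exact mul_le_mul_of_nonneg_right this hK0
      _ = δ⁻¹^2 * ((x - t)^2 * bdKernel n x t) := by ring
  have step2 : (∫ t in A, δ⁻¹^2 * ((x - t)^2 * bdKernel n x t))
      ≤ ∫ t in Set.Icc (0:ℝ) 1, δ⁻¹^2 * ((x - t)^2 * bdKernel n x t) := by
    apply setIntegral_mono_set hgI
    · filter_upwards [ae_restrict_mem measurableSet_Icc] with t ht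
      have := bd_nonneg n hx ht.1 ht.2
      positivity
    · exact HasSubset.Subset.eventuallyLE hAsub
  have step3 : (∫ t in Set.Icc (0:ℝ) 1, δ⁻¹^2 * ((x - t)^2 * bdKernel n x t))
      = δ⁻¹^2 * ∫ t in (0:ℝ)..1, (x - t)^2 * bdKernel n x t := by
    rw [MeasureTheory.integral_Icc_eq_integral_Ioc,
      ← intervalIntegral.integral_of_le zero_le_one, intervalIntegral.integral_const_mul]
  have hNpos : (0:ℝ) < 2 * n := by
    have : (1:ℝ) ≤ n := by exact_mod_cast hn
    linarith
  have step4 : δ⁻¹^2 * ∫ t in (0:ℝ)..1, (x - t)^2 * bdKernel n x t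
      ≤ δ⁻¹^2 * (1 / (2*n)) :=
    mul_le_mul_of_nonneg_left (sm_bound n hn x hx) (by positivity)
  have final : δ⁻¹^2 * (1 / (2*(n:ℝ))) = 1 / (2 * n * δ ^ 2) := by
    field_simp
  calc (∫ t in A, bdKernel n x t) ≤ _ := step1
    _ ≤ _ := step2
    _ = _ := step3
    _ ≤ _ := step4
    _ = _ := final
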